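/- arXiv:1904.01117 — 3 statements merged into one kernel-verified Lean document; each statement's English description precedes it below -/
import Mathlib

section
/- For every expectation f and every initial state s ∈ Σ, the weakest preexpectation of the loop equals the expected value of the stopped process: (lfp Φ_f)(s) = ∫_Ω X_τ^f dP_s. (No termination assumption on the loop is needed.) -/
open MeasureTheory Filter Topology
open scoped Classical ENNReal ENat NNReal

/-! Loop model: states `S`, guard `φ : Set S`, loop-body transition probabilities
`μ : S → S → ℝ≥0`. Expectations are functions `S → ℝ≥0∞` with the pointwise order. -/

variable {S : Type*}

/-- One-step weakest preexpectation of the loop body: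
`wpF μ X s = ∑_{s'} μ s s' * X s'`. -/
noncomputable def wpF (μ : S → S → ℝ≥0) (X : S → ℝ≥0∞) (s : S) : ℝ≥0∞ :=
  ∑' s', (μ s s' : ℝ≥0∞) * X s'

/-- The characteristic function `Φ_f` of the loop `while φ do C` with respect to the
postexpectation `f`. -/
noncomputable def Phi (φ : Set S) (μ : S → S → ℝ≥0) (f : S → ℝ≥0∞)
    (X : S → ℝ≥0∞) (s : S) : ℝ≥0∞ :=
  if s ∈ φ then wpF μ X s else f s

theorem Phi_mono (φ : Set S) (μ : S → S → ℝ≥0) (f : S → ℝ≥0∞) :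
    Monotone (Phi φ μ f) := by
  intro X Y h s
  unfold Phi wpF
  split_ifs with hs
  · exact ENNReal.tsum_le_tsum fun s' => mul_le_mul_right (h s') _
  · exact le_rfl

/-- Least fixed point of the characteristic function `Φ_f`,
i.e. the weakest preexpectation `wp(while φ do C)(f)`. -/
noncomputable def lfpPhi (φ : Set S) (μ : S → S → ℝ≥0) (f : S → ℝ≥0∞) : S → ℝ≥0∞ :=
  OrderHom.lfp ⟨Phi φ μ f, Phi_mono φ μ f⟩

/-- A finite expectation: `X s < ∞` for all states. -/
def FinExp (X : S → ℝ≥0∞) : Prop := ∀ s, X s < ⊤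

/-- A bounded expectation: `X s ≤ c` for some constant `c : ℝ≥0`. -/
def BddExp (X : S → ℝ≥0∞) : Prop := ∃ c : ℝ≥0, ∀ s, X s ≤ (c : ℝ≥0∞)

/-- `I` harmonizes with `f` if `I` agrees with `f` on all terminal states (states
outside the guard). -/
def Harmonizes (φ : Set S) (I f : S → ℝ≥0∞) : Prop := ∀ s ∉ φ, I s = f s

/-- `ΔI`: the expected change of `I` within one loop iteration. -/
noncomputable def dExp (φ : Set S) (μ : S → S → ℝ≥0) (I : S → ℝ≥0∞) (s : S) : ℝ≥0∞ :=
  if s ∈ φ then ∑' s', (μ s s' : ℝ≥0∞) * ((I s' - I s) ⊔ (I s - I s')) else 0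

/-- `I` is conditionally difference bounded if `ΔI` is bounded by a constant. -/
def CondDiffBdd (φ : Set S) (μ : S → S → ℝ≥0) (I : S → ℝ≥0∞) : Prop :=
  ∃ c : ℝ≥0, ∀ s, dExp φ μ I s ≤ (c : ℝ≥0∞)

/-! The loop space `Ω := ℕ → S` with its product σ-algebra (`S` discrete). -/

/-- The cylinder set of a finite sequence of states. -/
def Cyl (π : List S) : Set (ℕ → S) := {ϑ | ∀ i : Fin π.length, ϑ i = π.get i}

/-- The σ-algebra `F_n`, generated by the cylinder sets of sequences of length `n+1`. -/
def Fn (n : ℕ) : MeasurableSpace (ℕ → S) :=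
  MeasurableSpace.generateFrom {A | ∃ π : List S, π.length = n + 1 ∧ A = Cyl π}

/-- The shifted filtration `G_n := F_{n+1}`. -/
def Gn (n : ℕ) : MeasurableSpace (ℕ → S) := Fn (n + 1)

/-- One-step transition probability of the loop: from a state `a` inside the guard move
according to `μ`; a state outside the guard is absorbing. -/
noncomputable def stepP (φ : Set S) (μ : S → S → ℝ≥0) (a b : S) : ℝ≥0 :=
  if a ∈ φ then μ a b else if b = a then 1 else 0

/-- Product of the one-step transition probabilities along a finite sequence. -/
noncomputable def chainP (φ : Set S) (μ : S → S → ℝ≥0) : List S → ℝ≥0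
  | [] => 1
  | [_] => 1
  | a :: b :: rest => stepP φ μ a b * chainP φ μ (b :: rest)

/-- The prefix probability `p_s(π)` of the finite sequence `π` of states, starting the
loop in the state `s`. -/
noncomputable def prefP (φ : Set S) (μ : S → S → ℝ≥0) (s : S) (π : List S) : ℝ≥0 :=
  (if π.head? = some s then 1 else 0) * chainP φ μ π

/-- The looping time `τ`: the first time the run leaves the guard. -/
noncomputable def loopT (φ : Set S) (ϑ : ℕ → S) : ℕ∞ :=
  sInf {n : ℕ∞ | ∃ m : ℕ, n = (m : ℕ∞) ∧ ϑ m ∉ φ}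

/-- The stochastic process `X_n^{f,I}` induced by the invariant `I` (w.r.t. the
postexpectation `f`). -/
noncomputable def Xn (φ : Set S) (f I : S → ℝ≥0∞) (n : ℕ) (ϑ : ℕ → S) : ℝ≥0∞ :=
  if loopT φ ϑ ≤ (n : ℕ∞) then f (ϑ (loopT φ ϑ).toNat) else I (ϑ (n + 1))

/-- The stopped process `X_τ^f`. -/
noncomputable def Xstop (φ : Set S) (f : S → ℝ≥0∞) (ϑ : ℕ → S) : ℝ≥0∞ :=
  if loopT φ ϑ < ⊤ then f (ϑ (loopT φ ϑ).toNat) else 0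

section LoopTHelpers
variable {S : Type*}

theorem loopT_eq_coe (φ : Set S) (ϑ : ℕ → S) (n : ℕ) (h1 : ∀ k < n, ϑ k ∈ φ)
    (h2 : ϑ n ∉ φ) : loopT φ ϑ = (n : ℕ∞) := by
  apply le_antisymm
  · exact sInf_le ⟨n, rfl, h2⟩
  · refine le_sInf fun b hb => ?_
    obtain ⟨m, rfl, hm⟩ := hb
    exact Nat.cast_le.mpr (not_lt.1 fun hlt => hm (h1 m hlt))

theorem loopT_eq_top (φ : Set S) (ϑ : ℕ → S) (h : ∀ k, ϑ k ∈ φ) : loopT φ ϑ = ⊤ := by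
  refine sInf_eq_top.mpr fun a ha => ?_
  obtain ⟨m, rfl, hm⟩ := ha
  exact absurd (h m) hm

theorem loopT_dichotomy (φ : Set S) (ϑ : ℕ → S) :
    (∀ k, ϑ k ∈ φ) ∨ ∃ m : ℕ, loopT φ ϑ = (m : ℕ∞) ∧ ϑ m ∉ φ ∧ ∀ k < m, ϑ k ∈ φ := by
  by_cases h : ∀ k, ϑ k ∈ φ
  · exact Or.inl h
  · push_neg at h
    have h1 : ∀ k < Nat.find h, ϑ k ∈ φ := fun k hk => not_not.mp (Nat.find_min h hk)
    exact Or.inr ⟨Nat.find h, loopT_eq_coe φ ϑ _ h1 (Nat.find_spec h), Nat.find_spec h, h1⟩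

theorem loopT_shift (φ : Set S) (ϑ : ℕ → S) (h0 : ϑ 0 ∈ φ) :
    loopT φ ϑ = 1 + loopT φ (fun k => ϑ (k + 1)) := by
  rcases loopT_dichotomy φ ϑ with h | ⟨m, hm, hout, hin⟩
  · rw [loopT_eq_top φ ϑ h, loopT_eq_top φ _ (fun k => h (k + 1))]
    simp
  · match m, hm, hout, hin with
    | 0, hm, hout, hin => exact absurd h0 hout
    | (m + 1), hm, hout, hin =>
      rw [hm, loopT_eq_coe φ _ m (fun k hk => hin (k + 1) (by omega)) hout]
      push_cast
      ring

end LoopTHelpers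
section GAux
variable {S : Type*}

noncomputable def gAux (φ : Set S) (f : S → ℝ≥0∞) : (n : ℕ) → (Fin (n + 1) → S) → ℝ≥0∞
  | 0, v => if v 0 ∈ φ then 0 else f (v 0)
  | n + 1, v => if v 0 ∈ φ then gAux φ f n (Fin.tail v) else f (v 0)

theorem gAux_eq (φ : Set S) (f : S → ℝ≥0∞) :
    ∀ (n : ℕ) (ϑ : ℕ → S), gAux φ f n (fun i : Fin (n + 1) => ϑ i) =
      if loopT φ ϑ ≤ (n : ℕ∞) then f (ϑ (loopT φ ϑ).toNat) else 0
  | 0, ϑ => by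
    by_cases h0 : ϑ 0 ∈ φ
    · rw [gAux]
      rw [if_pos (by simpa using h0), if_neg]
      intro hle
      rcases loopT_dichotomy φ ϑ with h | ⟨m, hm, hout, _⟩
      · rw [loopT_eq_top φ ϑ h] at hle; simp at hle
      · rw [hm] at hle
        have hm0 : m = 0 := by exact_mod_cast Nat.le_zero.mp (by exact_mod_cast hle)
        exact hout (hm0 ▸ h0)
    · have hl : loopT φ ϑ = ((0 : ℕ) : ℕ∞) :=
        loopT_eq_coe φ ϑ 0 (fun k hk => absurd hk (Nat.not_lt_zero k)) h0
      rw [gAux, if_neg (by simpa using h0), hl]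
      simp
  | (n + 1), ϑ => by
    by_cases h0 : ϑ 0 ∈ φ
    · have htail : Fin.tail (fun i : Fin (n + 2) => ϑ i) =
          fun i : Fin (n + 1) => (fun k => ϑ (k + 1)) i := by
        funext i; simp [Fin.tail]
      rw [gAux, if_pos (by simpa using h0), htail, gAux_eq φ f n (fun k => ϑ (k + 1)),
        loopT_shift φ ϑ h0]
      set t := loopT φ (fun k => ϑ (k + 1)) with ht
      by_cases hle : t ≤ (n : ℕ∞)
      · have htne : t ≠ ⊤ := fun h => by rw [h] at hle; exact absurd hle (by simp)
        rw [if_pos hle, if_pos]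
        · congr 1
          rw [ENat.toNat_add (by simp) htne]
          simp [add_comm]
        · calc 1 + t ≤ 1 + (n : ℕ∞) := by gcongr
            _ = ((n + 1 : ℕ) : ℕ∞) := by push_cast; ring
      · rw [if_neg hle, if_neg]
        intro hc
        apply hle
        have : 1 + t ≤ 1 + (n : ℕ∞) := by
          refine hc.trans_eq ?_
          push_cast; ring
        exact (ENat.add_le_add_iff_left (by simp)).mp this
    · have hl : loopT φ ϑ = ((0 : ℕ) : ℕ∞) :=
        loopT_eq_coe φ ϑ 0 (fun k hk => absurd hk (Nat.not_lt_zero k)) h0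
      rw [gAux, if_neg (by simpa using h0), hl]
      simp

end GAux
section Mass
variable {S : Type*}

theorem chainP_cons_ofFn (φ : Set S) (μ : S → S → ℝ≥0) (b : S) {n : ℕ} (u : Fin (n + 1) → S) :
    chainP φ μ (b :: List.ofFn u) = stepP φ μ b (u 0) * chainP φ μ (List.ofFn u) := by
  rw [List.ofFn_succ]
  rfl

theorem stepP_mass (φ : Set S) (μ : S → S → ℝ≥0) (hμ : ∀ s, ∑' s', μ s s' = 1) (a : S) :
    ∑' b, (stepP φ μ a b : ℝ≥0∞) = 1 := by
  by_cases ha : a ∈ φ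
  · simp only [stepP, if_pos ha]
    have hsum : Summable (μ a) := by
      by_contra hc
      have := hμ a
      rw [tsum_eq_zero_of_not_summable hc] at this
      exact one_ne_zero this.symm
    rw [← ENNReal.coe_tsum hsum, hμ a, ENNReal.coe_one]
  · simp only [stepP, if_neg ha]
    have : ∀ b : S, ((if b = a then (1 : ℝ≥0) else 0 : ℝ≥0) : ℝ≥0∞) =
        if b = a then (1 : ℝ≥0∞) else 0 := fun b => by split <;> simp
    rw [tsum_congr this]
    exact tsum_ite_eq a 1

/-- Equivalence splitting off the first coordinate. -/
noncomputable def consE (S : Type*) (n : ℕ) : S × (Fin n → S) ≃ (Fin (n + 1) → S) :=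
  Fin.consEquiv fun _ => S

theorem consE_apply {n : ℕ} (p : S × (Fin n → S)) : consE S n p = Fin.cons p.1 p.2 := rfl

theorem tsum_split {n : ℕ} (F : (Fin (n + 1) → S) → ℝ≥0∞) :
    ∑' v : Fin (n + 1) → S, F v = ∑' (b : S) (u : Fin n → S), F (Fin.cons b u) := by
  rw [← (consE S n).tsum_eq F, ← ENNReal.tsum_prod]
  rfl

theorem chain_mass [Countable S] (φ : Set S) (μ : S → S → ℝ≥0) (hμ : ∀ s, ∑' s', μ s s' = 1) :
    ∀ (n : ℕ) (a : S),
      ∑' v : Fin (n + 1) → S,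
        (stepP φ μ a (v 0) : ℝ≥0∞) * (chainP φ μ (List.ofFn v) : ℝ≥0∞) = 1
  | 0, a => by
    rw [← (Equiv.funUnique (Fin 1) S).symm.tsum_eq]
    have : ∀ b : S, (stepP φ μ a (((Equiv.funUnique (Fin 1) S).symm b) 0) : ℝ≥0∞) *
        (chainP φ μ (List.ofFn ((Equiv.funUnique (Fin 1) S).symm b)) : ℝ≥0∞) =
        (stepP φ μ a b : ℝ≥0∞) := by
      intro b
      simp [Equiv.funUnique, chainP, List.ofFn_succ]
    rw [tsum_congr this]
    exact stepP_mass φ μ hμ a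
  | (n + 1), a => by
    rw [tsum_split]
    have : ∀ (b : S), ∑' u : Fin (n + 1) → S,
        (stepP φ μ a ((Fin.cons b u : Fin (n+2) → S) 0) : ℝ≥0∞) *
          (chainP φ μ (List.ofFn (Fin.cons b u)) : ℝ≥0∞) = (stepP φ μ a b : ℝ≥0∞) := by
      intro b
      have h1 : ∀ u : Fin (n + 1) → S,
          (stepP φ μ a ((Fin.cons b u : Fin (n+2) → S) 0) : ℝ≥0∞) *
            (chainP φ μ (List.ofFn (Fin.cons b u)) : ℝ≥0∞) =
          (stepP φ μ a b : ℝ≥0∞) *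
            ((stepP φ μ b (u 0) : ℝ≥0∞) * (chainP φ μ (List.ofFn u) : ℝ≥0∞)) := by
        intro u
        rw [List.ofFn_cons, chainP_cons_ofFn, Fin.cons_zero]
        push_cast
        ring
      rw [tsum_congr h1, ENNReal.tsum_mul_left, chain_mass φ μ hμ n b, mul_one]
    rw [tsum_congr this]
    exact stepP_mass φ μ hμ a

theorem prefP_ofFn (φ : Set S) (μ : S → S → ℝ≥0) (s : S) {n : ℕ} (v : Fin (n + 1) → S) :
    (prefP φ μ s (List.ofFn v) : ℝ≥0∞) =
      (if v 0 = s then (1 : ℝ≥0∞) else 0) * (chainP φ μ (List.ofFn v) : ℝ≥0∞) := by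
  have h : (List.ofFn v).head? = some (v 0) := by rw [List.ofFn_succ]; rfl
  rw [prefP, h]
  rcases eq_or_ne (v 0) s with h' | h' <;> simp [h']

theorem prefP_mass [Countable S] (φ : Set S) (μ : S → S → ℝ≥0) (hμ : ∀ s, ∑' s', μ s s' = 1) :
    ∀ (n : ℕ) (s : S), ∑' v : Fin (n + 1) → S, (prefP φ μ s (List.ofFn v) : ℝ≥0∞) = 1
  | 0, s => by
    rw [← (Equiv.funUnique (Fin 1) S).symm.tsum_eq]
    have : ∀ b : S, (prefP φ μ s (List.ofFn ((Equiv.funUnique (Fin 1) S).symm b)) : ℝ≥0∞) =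
        if b = s then (1 : ℝ≥0∞) else 0 := by
      intro b
      rw [prefP_ofFn]
      simp [Equiv.funUnique, chainP, List.ofFn_succ]
    rw [tsum_congr this]
    exact tsum_ite_eq s 1
  | (n + 1), s => by
    rw [tsum_split]
    rw [tsum_eq_single s ?_]
    · have : ∀ u : Fin (n + 1) → S,
          (prefP φ μ s (List.ofFn (Fin.cons s u)) : ℝ≥0∞) =
          (stepP φ μ s (u 0) : ℝ≥0∞) * (chainP φ μ (List.ofFn u) : ℝ≥0∞) := by
        intro u
        rw [prefP_ofFn, Fin.cons_zero, if_pos rfl, one_mul, List.ofFn_cons,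
          chainP_cons_ofFn]
        push_cast
        ring
      rw [tsum_congr this]
      exact chain_mass φ μ hμ n s
    · intro b hb
      have : ∀ u : Fin (n + 1) → S,
          (prefP φ μ s (List.ofFn (Fin.cons b u)) : ℝ≥0∞) = 0 := by
        intro u
        rw [prefP_ofFn, Fin.cons_zero, if_neg hb, zero_mul]
      rw [tsum_congr this, tsum_zero]

end Mass
section EESec
variable {S : Type*}

noncomputable def EE (φ : Set S) (μ : S → S → ℝ≥0) (f : S → ℝ≥0∞) (n : ℕ) (s : S) : ℝ≥0∞ :=
  ∑' v : Fin (n + 1) → S, gAux φ f n v * (prefP φ μ s (List.ofFn v) : ℝ≥0∞)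

theorem EE_zero (φ : Set S) (μ : S → S → ℝ≥0) (f : S → ℝ≥0∞) (s : S) :
    EE φ μ f 0 s = if s ∈ φ then 0 else f s := by
  rw [EE, ← (Equiv.funUnique (Fin 1) S).symm.tsum_eq]
  have h1 : ∀ b : S, gAux φ f 0 ((Equiv.funUnique (Fin 1) S).symm b) *
      (prefP φ μ s (List.ofFn ((Equiv.funUnique (Fin 1) S).symm b)) : ℝ≥0∞) =
      if b = s then (if s ∈ φ then 0 else f s) else 0 := by
    intro b
    rw [prefP_ofFn]
    rcases eq_or_ne b s with h | h
    · subst h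
      simp [Equiv.funUnique, gAux, chainP, List.ofFn_succ]
    · simp [Equiv.funUnique, h]
  rw [tsum_congr h1]
  exact tsum_ite_eq s _

theorem EE_succ [Countable S] (φ : Set S) (μ : S → S → ℝ≥0) (hμ : ∀ s, ∑' s', μ s s' = 1)
    (f : S → ℝ≥0∞) (n : ℕ) (s : S) :
    EE φ μ f (n + 1) s = Phi φ μ f (EE φ μ f n) s := by
  by_cases hs : s ∈ φ
  · rw [Phi, if_pos hs, wpF, EE, tsum_split, tsum_eq_single s ?_]
    · have hterm : ∀ u : Fin (n + 1) → S,
          gAux φ f (n + 1) (Fin.cons s u) * (prefP φ μ s (List.ofFn (Fin.cons s u)) : ℝ≥0∞) =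
          (μ s (u 0) : ℝ≥0∞) * (gAux φ f n u * (prefP φ μ (u 0) (List.ofFn u) : ℝ≥0∞)) := by
        intro u
        have hg : gAux φ f (n + 1) (Fin.cons s u) = gAux φ f n u := by
          rw [gAux, if_pos (by rwa [Fin.cons_zero]), Fin.tail_cons]
        rw [hg, prefP_ofFn, Fin.cons_zero, if_pos rfl, one_mul, List.ofFn_cons,
          chainP_cons_ofFn, prefP_ofFn, if_pos rfl, one_mul]
        have hst : stepP φ μ s (u 0) = μ s (u 0) := by rw [stepP, if_pos hs]
        rw [hst]
        push_cast
        ring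
      rw [tsum_congr hterm]
      have h2 : ∀ u : Fin (n + 1) → S,
          (μ s (u 0) : ℝ≥0∞) * (gAux φ f n u * (prefP φ μ (u 0) (List.ofFn u) : ℝ≥0∞)) =
          ∑' s' : S, (μ s s' : ℝ≥0∞) * (gAux φ f n u * (prefP φ μ s' (List.ofFn u) : ℝ≥0∞)) := by
        intro u
        rw [tsum_eq_single (u 0) ?_]
        intro s' hs'
        rw [prefP_ofFn, if_neg (fun h => hs' h.symm), zero_mul, mul_zero, mul_zero]
      rw [tsum_congr h2, ENNReal.tsum_comm]
      exact tsum_congr fun s' => ENNReal.tsum_mul_left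
    · intro b hb
      have : ∀ u : Fin (n + 1) → S,
          gAux φ f (n + 1) (Fin.cons b u) * (prefP φ μ s (List.ofFn (Fin.cons b u)) : ℝ≥0∞) = 0 := by
        intro u
        rw [prefP_ofFn, Fin.cons_zero, if_neg hb, zero_mul, mul_zero]
      rw [tsum_congr this, tsum_zero]
  · rw [Phi, if_neg hs, EE]
    have : ∀ v : Fin (n + 2) → S,
        gAux φ f (n + 1) v * (prefP φ μ s (List.ofFn v) : ℝ≥0∞) =
        f s * (prefP φ μ s (List.ofFn v) : ℝ≥0∞) := by
      intro v
      rcases eq_or_ne (v 0) s with h | h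
      · rw [gAux, if_neg (h ▸ hs), h]
      · rw [prefP_ofFn, if_neg h, zero_mul, mul_zero, mul_zero]
    rw [tsum_congr this, ENNReal.tsum_mul_left, prefP_mass φ μ hμ (n + 1) s, mul_one]

theorem EE_mono [Countable S] (φ : Set S) (μ : S → S → ℝ≥0) (hμ : ∀ s, ∑' s', μ s s' = 1)
    (f : S → ℝ≥0∞) : Monotone (EE φ μ f) := by
  apply monotone_nat_of_le_succ
  intro n
  induction n with
  | zero =>
    intro s
    rw [EE_succ φ μ hμ f 0 s, Phi]
    split_ifs with h
    · rw [EE_zero, if_pos h]; exact zero_le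
    · rw [EE_zero, if_neg h]
  | succ n ih =>
    intro s
    rw [EE_succ φ μ hμ f n s, EE_succ φ μ hμ f (n + 1) s]
    exact Phi_mono φ μ f ih s

end EESec
section LfpSec
variable {S : Type*}

theorem tsum_iSup_swap {α : Type*} [Countable α] [MeasurableSpace α] [DiscreteMeasurableSpace α]
    (F : ℕ → α → ℝ≥0∞) (hF : Monotone F) :
    ∑' a, ⨆ n, F n a = ⨆ n, ∑' a, F n a := by
  rw [← MeasureTheory.lintegral_count,
    MeasureTheory.lintegral_iSup (fun n => Measurable.of_discrete) hF]
  exact iSup_congr fun n => MeasureTheory.lintegral_count _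

theorem lfp_eq_iSup_EE [Countable S] [MeasurableSpace S] [DiscreteMeasurableSpace S]
    (φ : Set S) (μ : S → S → ℝ≥0) (hμ : ∀ s, ∑' s', μ s s' = 1) (f : S → ℝ≥0∞) :
    lfpPhi φ μ f = fun s => ⨆ n, EE φ μ f n s := by
  apply le_antisymm
  · rw [lfpPhi]
    apply OrderHom.lfp_le
    intro s
    show Phi φ μ f _ s ≤ _
    rw [Phi]
    split_ifs with hs
    · have hw : wpF μ (fun s' => ⨆ n, EE φ μ f n s') s = ⨆ n, wpF μ (EE φ μ f n) s := by
        rw [wpF]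
        have h1 : ∀ s', (μ s s' : ℝ≥0∞) * ⨆ n, EE φ μ f n s' =
            ⨆ n, (μ s s' : ℝ≥0∞) * EE φ μ f n s' := fun s' => ENNReal.mul_iSup _ _
        rw [tsum_congr h1,
          tsum_iSup_swap (fun n s' => (μ s s' : ℝ≥0∞) * EE φ μ f n s')
            (fun m k hmk s' => mul_le_mul_right (EE_mono φ μ hμ f hmk s') _)]
        exact iSup_congr fun n => rfl
      rw [hw]
      apply iSup_le fun n => ?_
      have h2 : wpF μ (EE φ μ f n) s = EE φ μ f (n + 1) s := by
        rw [EE_succ φ μ hμ f n s, Phi, if_pos hs]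
      rw [h2]
      exact le_iSup (fun n => EE φ μ f n s) (n + 1)
    · have h3 : EE φ μ f 1 s = f s := by
        rw [EE_succ φ μ hμ f 0 s, Phi, if_neg hs]
      exact h3 ▸ le_iSup (fun n => EE φ μ f n s) 1
  · intro s
    apply iSup_le fun n => ?_
    have key : ∀ m, EE φ μ f m ≤ lfpPhi φ μ f := by
      intro m
      induction m with
      | zero =>
        intro t
        have hfix : Phi φ μ f (lfpPhi φ μ f) = lfpPhi φ μ f :=
          OrderHom.map_lfp (⟨Phi φ μ f, Phi_mono φ μ f⟩ : _ →o _)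
        rw [EE_zero, ← hfix, Phi]
        split_ifs with ht
        · exact zero_le
        · exact le_rfl
      | succ m ih =>
        intro t
        have hfix : Phi φ μ f (lfpPhi φ μ f) = lfpPhi φ μ f :=
          OrderHom.map_lfp (⟨Phi φ μ f, Phi_mono φ μ f⟩ : _ →o _)
        rw [EE_succ φ μ hμ f m t, ← hfix]
        exact Phi_mono φ μ f ih t
    exact key n s

end LfpSec
section MeasureSec
variable {S : Type*}

def CylV {n : ℕ} (v : Fin n → S) : Set (ℕ → S) := {ϑ | ∀ i : Fin n, ϑ i = v i}

theorem measurableSet_CylV [MeasurableSpace S] [DiscreteMeasurableSpace S] {n : ℕ}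
    (v : Fin n → S) : MeasurableSet (CylV v) := by
  have h : CylV v = ⋂ i : Fin n, (fun ϑ : ℕ → S => ϑ (i : ℕ)) ⁻¹' {v i} := by
    ext ϑ; simp [CylV]
  rw [h]
  exact MeasurableSet.iInter fun i => (measurable_pi_apply _) (MeasurableSet.singleton _)

theorem Cyl_ofFn {n : ℕ} (v : Fin (n + 1) → S) : Cyl (List.ofFn v) = CylV v := by
  ext ϑ
  simp only [Cyl, CylV, Set.mem_setOf_eq, List.get_ofFn]
  constructor
  · intro H i
    simpa using H (Fin.cast (List.length_ofFn (f := v)).symm i)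
  · intro H i
    simpa using H (Fin.cast (List.length_ofFn (f := v)) i)

theorem ofFn_ne_nil {n : ℕ} (v : Fin (n + 1) → S) : List.ofFn v ≠ [] := fun h => by
  simpa using congrArg List.length h

theorem gAux_repr [Countable S] (φ : Set S) (f : S → ℝ≥0∞) (n : ℕ) (ϑ : ℕ → S) :
    gAux φ f n (fun i : Fin (n + 1) => ϑ i) =
      ∑' v : Fin (n + 1) → S, (CylV v).indicator (fun _ => gAux φ f n v) ϑ := by
  symm
  rw [tsum_eq_single (fun i : Fin (n + 1) => ϑ i) ?_]
  · have hmem : ϑ ∈ CylV (fun i : Fin (n + 1) => ϑ i) := fun i => rfl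
    exact Set.indicator_of_mem hmem _
  · intro v hv
    apply Set.indicator_of_notMem
    intro hmem
    exact hv (funext fun i => (hmem i).symm)

theorem Yn_meas [Countable S] [MeasurableSpace S] [DiscreteMeasurableSpace S]
    (φ : Set S) (f : S → ℝ≥0∞) (n : ℕ) :
    Measurable fun ϑ : ℕ → S => gAux φ f n (fun i : Fin (n + 1) => ϑ i) := by
  have h : (fun ϑ : ℕ → S => gAux φ f n (fun i : Fin (n + 1) => ϑ i)) =
      fun ϑ => ∑' v : Fin (n + 1) → S, (CylV v).indicator (fun _ => gAux φ f n v) ϑ :=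
    funext fun ϑ => gAux_repr φ f n ϑ
  rw [h]
  exact Measurable.ennreal_tsum fun v => measurable_const.indicator (measurableSet_CylV v)

theorem Yn_mono (φ : Set S) (f : S → ℝ≥0∞) :
    Monotone fun (n : ℕ) (ϑ : ℕ → S) => gAux φ f n (fun i : Fin (n + 1) => ϑ i) := by
  apply monotone_nat_of_le_succ
  intro n ϑ
  show gAux φ f n (fun i : Fin (n+1) => ϑ i) ≤ gAux φ f (n+1) (fun i : Fin (n+2) => ϑ i)
  rw [gAux_eq, gAux_eq]
  split_ifs with h1 h2
  · exact le_rfl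
  · exact absurd (h1.trans (by exact_mod_cast Nat.cast_le.mpr (Nat.le_succ n))) h2
  · exact zero_le
  · exact le_rfl

theorem iSup_Yn (φ : Set S) (f : S → ℝ≥0∞) (ϑ : ℕ → S) :
    ⨆ n, gAux φ f n (fun i : Fin (n + 1) => ϑ i) = Xstop φ f ϑ := by
  rcases loopT_dichotomy φ ϑ with h | ⟨m, hm, _, _⟩
  · have ht := loopT_eq_top φ ϑ h
    rw [Xstop, if_neg (by rw [ht]; exact lt_irrefl ⊤)]
    refine le_antisymm (iSup_le fun n => ?_) (zero_le)
    rw [gAux_eq, ht, if_neg (by simp)]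
  · rw [Xstop, if_pos (by rw [hm]; exact WithTop.coe_lt_top m)]
    apply le_antisymm
    · apply iSup_le fun n => ?_
      rw [gAux_eq]
      split_ifs
      · exact le_rfl
      · exact zero_le
    · have h2 : gAux φ f m (fun i : Fin (m + 1) => ϑ i) = f (ϑ (loopT φ ϑ).toNat) := by
        rw [gAux_eq, if_pos (hm ▸ le_rfl)]
      exact h2 ▸ le_iSup (fun n => gAux φ f n (fun i : Fin (n + 1) => ϑ i)) m

end MeasureSec
theorem lint_gAux {S : Type*} [Countable S] [MeasurableSpace S] [DiscreteMeasurableSpace S]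
    (φ : Set S) (μ : S → S → ℝ≥0) (P : S → Measure (ℕ → S))
    (hPC : ∀ (s : S) (π : List S), π ≠ [] → P s (Cyl π) = (prefP φ μ s π : ℝ≥0∞))
    (f : S → ℝ≥0∞) (n : ℕ) (s : S) :
    ∫⁻ ϑ, gAux φ f n (fun i : Fin (n + 1) => ϑ i) ∂(P s) = EE φ μ f n s := by
  rw [lintegral_congr (fun ϑ => gAux_repr φ f n ϑ),
    lintegral_tsum (fun v => (measurable_const.indicator (measurableSet_CylV v)).aemeasurable),
    EE]
  refine tsum_congr fun v => ?_
  rw [lintegral_indicator_const (measurableSet_CylV v), ← Cyl_ofFn,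
    hPC s _ (ofFn_ne_nil v)]

/-- **The weakest preexpectation is the expected value of the stopped process:**
`(lfp Φ_f)(s) = E_s[X_τ^f]`, with no termination assumption on the loop. -/
theorem lfp_eq_lintegral_Xstop {S : Type*} [Countable S] [MeasurableSpace S] [DiscreteMeasurableSpace S]
    (φ : Set S) (μ : S → S → ℝ≥0) (hμ : ∀ s, ∑' s', μ s s' = 1)
    (P : S → Measure (ℕ → S)) (hP : ∀ s, IsProbabilityMeasure (P s))
    (hPC : ∀ (s : S) (π : List S), π ≠ [] → P s (Cyl π) = (prefP φ μ s π : ℝ≥0∞))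
    (f : S → ℝ≥0∞) (s : S) :
    lfpPhi φ μ f s = ∫⁻ ϑ, Xstop φ f ϑ ∂(P s) := by
  rw [congrFun (lfp_eq_iSup_EE φ μ hμ f) s]
  have h1 : (⨆ n, EE φ μ f n s) =
      ⨆ n, ∫⁻ ϑ, gAux φ f n (fun i : Fin (n + 1) => ϑ i) ∂(P s) :=
    iSup_congr fun n => (lint_gAux φ μ P hPC f n s).symm
  rw [h1, ← MeasureTheory.lintegral_iSup (fun n => Yn_meas φ f n) (Yn_mono φ f)]
  exact lintegral_congr fun ϑ => iSup_Yn φ f ϑ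
end

section
/- Optional Stopping Theorem for weakest preexpectations, case (a): let f be a finite expectation and let I be a finite expectation with I ⪯ Φ_f(I) (a subinvariant) such that Φ_fⁿ(I) is finite for every n ∈ ℕ. If the looping time is almost surely bounded from every initial state, i.e., for every s ∈ Σ there exists N(s) ∈ ℕ with P_s(τ ≤ N(s)) = 1, then I ⪯ lfp Φ_f. -/
open MeasureTheory Filter Topology
open scoped Classical ENNReal ENat NNReal

/-! Loop model: states `S`, guard `φ : Set S`, loop-body transition probabilities
`μ : S → S → ℝ≥0`. Expectations are functions `S → ℝ≥0∞` with the pointwise order. -/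

variable {S : Type*}

/-- Auxiliary: the "guard-restricted" one-step operator. -/
noncomputable def Tf (φ : Set S) (μ : S → S → ℝ≥0) (X : S → ℝ≥0∞) (s : S) : ℝ≥0∞ :=
  if s ∈ φ then wpF μ X s else 0

lemma phi_decomp (φ : Set S) (μ : S → S → ℝ≥0) (f : S → ℝ≥0∞) (X : S → ℝ≥0∞) :
    ∀ n s, (Phi φ μ f)^[n] X s = (Phi φ μ f)^[n] 0 s + (Tf φ μ)^[n] X s := by
  intro n
  induction n with
  | zero => intro s; simp
  | succ n ih =>
    intro s
    rw [Function.iterate_succ_apply', Function.iterate_succ_apply',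
        Function.iterate_succ_apply']
    unfold Phi Tf wpF
    split_ifs with hs
    · calc ∑' s', (μ s s' : ℝ≥0∞) * ((Phi φ μ f)^[n] X s')
          = ∑' s', ((μ s s' : ℝ≥0∞) * ((Phi φ μ f)^[n] 0 s')
              + (μ s s' : ℝ≥0∞) * ((Tf φ μ)^[n] X s')) := by
            apply tsum_congr; intro s'; rw [ih s', mul_add]
        _ = _ := ENNReal.tsum_add
    · simp

/-- All guard-paths of length `n+1` starting in `s` have chain probability `0`. -/
def Hprop (φ : Set S) (μ : S → S → ℝ≥0) (n : ℕ) (s : S) : Prop :=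
  ∀ π : List S, π.length = n + 1 → π.head? = some s →
    (∀ i : Fin π.length, (i : ℕ) < n → π.get i ∈ φ) → chainP φ μ π = 0

lemma Tf_pos (φ : Set S) (μ : S → S → ℝ≥0) (X : S → ℝ≥0∞) {s : S} (hs : s ∈ φ) :
    Tf φ μ X s = wpF μ X s := if_pos hs

lemma Tf_neg (φ : Set S) (μ : S → S → ℝ≥0) (X : S → ℝ≥0∞) {s : S} (hs : s ∉ φ) :
    Tf φ μ X s = 0 := if_neg hs

lemma Tf_iter_zero (φ : Set S) (μ : S → S → ℝ≥0) :
    ∀ n (s : S) (X : S → ℝ≥0∞), Hprop φ μ (n + 1) s → (Tf φ μ)^[n + 1] X s = 0 := by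
  intro n
  induction n with
  | zero =>
    intro s X hH
    show Tf φ μ X s = 0
    by_cases hs : s ∈ φ
    · rw [Tf_pos φ μ X hs]
      unfold wpF
      apply ENNReal.tsum_eq_zero.2
      intro s'
      have h0 : chainP φ μ [s, s'] = 0 := by
        apply hH [s, s'] rfl rfl
        intro i hi
        have : (i : ℕ) = 0 := by omega
        have h2 := i.2
        rcases i with ⟨iv, hiv⟩
        simp only [Fin.val_mk] at this
        subst this
        simpa using hs
      have : stepP φ μ s s' * chainP φ μ [s'] = 0 := h0
      rw [show chainP φ μ [s'] = 1 from rfl, mul_one, stepP, if_pos hs] at this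
      simp [this]
    · exact Tf_neg φ μ X hs
  | succ n ih =>
    intro s X hH
    rw [Function.iterate_succ_apply']
    show Tf φ μ ((Tf φ μ)^[n + 1] X) s = 0
    by_cases hs : s ∈ φ
    · rw [Tf_pos φ μ _ hs]
      unfold wpF
      apply ENNReal.tsum_eq_zero.2
      intro s'
      by_cases hμ0 : μ s s' = 0
      · simp [hμ0]
      · have hz : (Tf φ μ)^[n + 1] X s' = 0 := by
          apply ih s' X
          intro π hlen hhead hguard
          -- π is nonempty with head s'
          rcases π with _ | ⟨a, rest⟩
          · simp at hhead
          · have ha : a = s' := by simpa using hhead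
            have hμ0' : ¬ μ s a = 0 := by rw [ha]; exact hμ0
            have hchain : chainP φ μ (s :: a :: rest) = 0 := by
              apply hH (s :: a :: rest) (by simp at hlen ⊢; omega) rfl
              intro i hi
              rcases i with ⟨iv, hiv⟩
              cases iv with
              | zero => simpa using hs
              | succ j =>
                have hj : j < n + 1 := by
                  simp only [Fin.val_mk] at hi; omega
                have := hguard ⟨j, by simp at hiv ⊢; omega⟩ hj
                simpa using this
            have hstep : stepP φ μ s a * chainP φ μ (a :: rest) = 0 := hchain
            rw [stepP, if_pos hs] at hstep
            rcases mul_eq_zero.1 hstep with h | h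
            · exact absurd h hμ0'
            · exact h
        rw [hz, mul_zero]
    · exact Tf_neg φ μ _ hs

lemma loopT_le_iff (φ : Set S) (ϑ : ℕ → S) (N : ℕ) :
    loopT φ ϑ ≤ (N : ℕ∞) ↔ ∃ m ≤ N, ϑ m ∉ φ := by
  constructor
  · intro h
    by_contra hc
    push_neg at hc
    have hlb : ∀ x ∈ {n : ℕ∞ | ∃ m : ℕ, n = (m : ℕ∞) ∧ ϑ m ∉ φ}, ((N : ℕ∞) + 1) ≤ x := by
      rintro x ⟨m, rfl, hm⟩
      have hNm : N + 1 ≤ m := by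
        by_contra h'
        exact hm (hc m (by omega))
      exact_mod_cast hNm
    have h2 : ((N : ℕ∞) + 1) ≤ loopT φ ϑ := le_sInf hlb
    have h3 : ((N : ℕ∞) + 1) ≤ (N : ℕ∞) := h2.trans h
    have : (N : ℕ∞) < (N : ℕ∞) + 1 := by
      exact_mod_cast Nat.lt_succ_self N
    exact absurd h3 (not_le.2 this)
  · rintro ⟨m, hm, hϑ⟩
    refine le_trans (sInf_le ⟨m, rfl, hϑ⟩) ?_
    exact_mod_cast hm

lemma le_phi_iterate (φ : Set S) (μ : S → S → ℝ≥0) (f I : S → ℝ≥0∞)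
    (hsub : I ≤ Phi φ μ f I) : ∀ n, I ≤ (Phi φ μ f)^[n] I := by
  intro n
  induction n with
  | zero => simp
  | succ n ih =>
    calc I ≤ (Phi φ μ f)^[n] I := ih
      _ ≤ (Phi φ μ f)^[n] (Phi φ μ f I) := (Phi_mono φ μ f).iterate n hsub
      _ = (Phi φ μ f)^[n + 1] I := (Function.iterate_succ_apply _ _ _).symm

lemma phi_iterate_zero_le_lfp (φ : Set S) (μ : S → S → ℝ≥0) (f : S → ℝ≥0∞) :
    ∀ n, (Phi φ μ f)^[n] 0 ≤ lfpPhi φ μ f := by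
  intro n
  induction n with
  | zero => intro s; exact zero_le
  | succ n ih =>
    rw [Function.iterate_succ_apply']
    calc Phi φ μ f ((Phi φ μ f)^[n] 0) ≤ Phi φ μ f (lfpPhi φ μ f) := Phi_mono φ μ f ih
      _ = lfpPhi φ μ f := OrderHom.map_lfp ⟨Phi φ μ f, Phi_mono φ μ f⟩

/-- **Optional Stopping Theorem for weakest preexpectations, case (a).** A finite
subinvariant `I` (w.r.t. a finite postexpectation `f`) with all iterates `Φ_fⁿ(I)` finite
is a lower bound on `lfp Φ_f`, provided the looping time is almost surely bounded from
every initial state. -/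
theorem ost_wp_case_a {S : Type*} [Countable S] [MeasurableSpace S] [DiscreteMeasurableSpace S]
    (φ : Set S) (μ : S → S → ℝ≥0) (hμ : ∀ s, ∑' s', μ s s' = 1)
    (P : S → Measure (ℕ → S)) (hP : ∀ s, IsProbabilityMeasure (P s))
    (hPC : ∀ (s : S) (π : List S), π ≠ [] → P s (Cyl π) = (prefP φ μ s π : ℝ≥0∞))
    (f I : S → ℝ≥0∞) (hf : FinExp f) (hI : FinExp I) (hsub : I ≤ Phi φ μ f I)
    (hfin : ∀ n : ℕ, FinExp ((Phi φ μ f)^[n] I))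
    (hbdd : ∀ s : S, ∃ N : ℕ, P s {ϑ | loopT φ ϑ ≤ (N : ℕ∞)} = 1) :
    I ≤ lfpPhi φ μ f := by
  intro s
  obtain ⟨N, hN⟩ := hbdd s
  have hH : Hprop φ μ (N + 1) s := by
    intro π hlen hhead hguard
    have hne : π ≠ [] := by intro h; simp [h] at hlen
    have hcyl : P s (Cyl π) = (prefP φ μ s π : ℝ≥0∞) := hPC s π hne
    have hpref : prefP φ μ s π = chainP φ μ π := by
      unfold prefP
      rw [if_pos hhead, one_mul]
    have hsubset : Cyl π ⊆ {ϑ | loopT φ ϑ ≤ (N : ℕ∞)}ᶜ := by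
      intro ϑ hϑ
      simp only [Set.mem_compl_iff, Set.mem_setOf_eq, loopT_le_iff]
      push_neg
      intro m hm
      have hmlt : m < π.length := by omega
      have h := hϑ ⟨m, hmlt⟩
      have h' : ϑ m = π.get ⟨m, hmlt⟩ := h
      rw [h']
      exact hguard ⟨m, hmlt⟩ (Nat.lt_succ_of_le hm)
    have hmeas : MeasurableSet {ϑ : ℕ → S | loopT φ ϑ ≤ (N : ℕ∞)} := by
      have hset : {ϑ : ℕ → S | loopT φ ϑ ≤ (N : ℕ∞)}
          = ⋃ m ∈ Finset.range (N + 1), {ϑ : ℕ → S | ϑ m ∉ φ} := by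
        ext ϑ
        simp [loopT_le_iff, Nat.lt_succ_iff]
      rw [hset]
      refine MeasurableSet.biUnion (Finset.range (N + 1)).countable_toSet ?_
      intro m _
      have : MeasurableSet ((fun ϑ : ℕ → S => ϑ m) ⁻¹' φᶜ) :=
        (measurable_pi_apply m) (MeasurableSet.of_discrete (s := φᶜ))
      exact this
    have h0 : P s ({ϑ | loopT φ ϑ ≤ (N : ℕ∞)}ᶜ) = 0 := by
      have := hP s
      rw [measure_compl hmeas (measure_ne_top _ _), hN, measure_univ, tsub_self]
    have hz : P s (Cyl π) = 0 := measure_mono_null hsubset h0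
    rw [hcyl, hpref] at hz
    exact_mod_cast hz
  have h1 : I s ≤ (Phi φ μ f)^[N + 1] I s := le_phi_iterate φ μ f I hsub (N + 1) s
  have h2 := phi_decomp φ μ f I (N + 1) s
  have h3 : (Tf φ μ)^[N + 1] I s = 0 := Tf_iter_zero φ μ N s I hH
  calc I s ≤ (Phi φ μ f)^[N + 1] I s := h1
    _ = (Phi φ μ f)^[N + 1] 0 s + 0 := by rw [h2, h3]
    _ = (Phi φ μ f)^[N + 1] 0 s := add_zero _
    _ ≤ lfpPhi φ μ f s := phi_iterate_zero_le_lfp φ μ f (N + 1) s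
end

section
/- Let f be a finite expectation and let I be a finite expectation that harmonizes with f, is conditionally difference bounded, and satisfies that Φ_f(I) is finite. If s ∈ Σ is a state with finite expected looping time E_s[τ] < ∞, then Φ_fⁿ(I)(s) < ∞ for every n ∈ ℕ and lim_{n→∞} Φ_fⁿ(I)(s) = (lfp Φ_f)(s). -/
open MeasureTheory Filter Topology
open scoped Classical ENNReal ENat NNReal

/-! Loop model: states `S`, guard `φ : Set S`, loop-body transition probabilities
`μ : S → S → ℝ≥0`. Expectations are functions `S → ℝ≥0∞` with the pointwise order. -/

variable {S : Type*}

section UIAux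

open MeasureTheory

variable {S : Type*}

/-- Symmetric difference of the invariant at two states. -/
noncomputable def dIx (I : S → ℝ≥0∞) (a b : S) : ℝ≥0∞ := (I a - I b) ⊔ (I b - I a)

lemma le_add_dIx (I : S → ℝ≥0∞) (a b : S) : I a ≤ I b + dIx I a b :=
  le_add_tsub.trans (add_le_add_right le_sup_left _)

lemma mass_one {μ : S → S → ℝ≥0} (hμ : ∀ s, ∑' s', μ s s' = 1) (s : S) :
    ∑' a, (μ s a : ℝ≥0∞) = 1 := by
  have hs : Summable (μ s) := by
    by_contra h
    have h1 := hμ s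
    rw [tsum_eq_zero_of_not_summable h] at h1
    exact zero_ne_one h1
  rw [← ENNReal.coe_tsum hs, hμ s, ENNReal.coe_one]

lemma wpF_add_const {μ : S → S → ℝ≥0} (hμ : ∀ s, ∑' s', μ s s' = 1)
    (X : S → ℝ≥0∞) (r : ℝ≥0∞) (s : S) :
    wpF μ (fun t => X t + r) s = wpF μ X s + r := by
  unfold wpF
  calc ∑' a, (μ s a : ℝ≥0∞) * (X a + r)
      = ∑' a, ((μ s a : ℝ≥0∞) * X a + (μ s a : ℝ≥0∞) * r) := by simp [mul_add]
    _ = (∑' a, (μ s a : ℝ≥0∞) * X a) + ∑' a, (μ s a : ℝ≥0∞) * r := ENNReal.tsum_add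
    _ = _ := by rw [ENNReal.tsum_mul_right, mass_one hμ, one_mul]

lemma Phi_add_const_le {φ : Set S} {μ : S → S → ℝ≥0} (hμ : ∀ s, ∑' s', μ s s' = 1)
    (f X : S → ℝ≥0∞) (r : ℝ≥0∞) (s : S) :
    Phi φ μ f (fun t => X t + r) s ≤ Phi φ μ f X s + r := by
  unfold Phi
  split_ifs with h
  · rw [wpF_add_const hμ]
  · exact le_self_add

lemma Phi_I_le {φ : Set S} {μ : S → S → ℝ≥0} (hμ : ∀ s, ∑' s', μ s s' = 1)
    {f I : S → ℝ≥0∞} (hharm : Harmonizes φ I f) {c : ℝ≥0}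
    (hc : ∀ s, dExp φ μ I s ≤ (c : ℝ≥0∞)) (s : S) :
    Phi φ μ f I s ≤ I s + c := by
  unfold Phi
  split_ifs with h
  · have h1 : wpF μ I s ≤ I s + dExp φ μ I s := by
      unfold wpF
      rw [dExp, if_pos h]
      calc ∑' a, (μ s a : ℝ≥0∞) * I a
          ≤ ∑' a, (μ s a : ℝ≥0∞) * (I s + ((I a - I s) ⊔ (I s - I a))) :=
            ENNReal.tsum_le_tsum fun a => mul_le_mul_right (le_add_dIx I a s) _
        _ = (∑' a, (μ s a : ℝ≥0∞) * I s) + ∑' a, (μ s a : ℝ≥0∞) * ((I a - I s) ⊔ (I s - I a)) := by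
            rw [← ENNReal.tsum_add]; simp [mul_add]
        _ = I s + ∑' a, (μ s a : ℝ≥0∞) * ((I a - I s) ⊔ (I s - I a)) := by
            rw [ENNReal.tsum_mul_right, mass_one hμ, one_mul]
    exact h1.trans (add_le_add_right (hc s) _)
  · rw [← hharm s h]; exact le_self_add

lemma iter_bound {φ : Set S} {μ : S → S → ℝ≥0} (hμ : ∀ s, ∑' s', μ s s' = 1)
    {f I : S → ℝ≥0∞} (hharm : Harmonizes φ I f) {c : ℝ≥0}
    (hc : ∀ s, dExp φ μ I s ≤ (c : ℝ≥0∞)) :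
    ∀ n s, (Phi φ μ f)^[n] I s ≤ I s + n * c := by
  intro n
  induction n with
  | zero => intro s; simp
  | succ n ih =>
    intro s
    rw [Function.iterate_succ_apply']
    calc Phi φ μ f ((Phi φ μ f)^[n] I) s
        ≤ Phi φ μ f (fun t => I t + n * c) s := Phi_mono φ μ f (fun t => ih t) s
      _ ≤ Phi φ μ f I s + n * c := Phi_add_const_le hμ f I _ s
      _ ≤ (I s + c) + n * c := add_le_add_left (Phi_I_le hμ hharm hc s) _
      _ = I s + (n + 1 : ℕ) * c := by
          rw [add_assoc]
          congr 1
          push_cast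
          ring

/-! ### Kleene iteration for the least fixed point -/

lemma tsum_iSup_swap_s17 [Countable S] [MeasurableSpace S] [MeasurableSingletonClass S]
    (g : ℕ → S → ℝ≥0∞) (hg : Monotone g) :
    ∑' a, ⨆ n, g n a = ⨆ n, ∑' a, g n a := by
  have h1 : ∀ h : S → ℝ≥0∞, ∑' a, h a = ∫⁻ a, h a ∂(Measure.count) := fun h =>
    (lintegral_count h).symm
  rw [h1]
  simp only [h1]
  exact lintegral_iSup (fun n => measurable_of_countable _) hg

lemma iterate_zero_mono (φ : Set S) (μ : S → S → ℝ≥0) (f : S → ℝ≥0∞) :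
    Monotone (fun n => (Phi φ μ f)^[n] (fun _ => 0)) := by
  apply monotone_nat_of_le_succ
  intro n
  induction n with
  | zero => intro s; exact zero_le
  | succ n ih =>
    rw [Function.iterate_succ_apply', Function.iterate_succ_apply']
    exact Phi_mono φ μ f ih

lemma lfpPhi_eq_iSup [Countable S] [MeasurableSpace S] [MeasurableSingletonClass S]
    (φ : Set S) (μ : S → S → ℝ≥0) (f : S → ℝ≥0∞) :
    lfpPhi φ μ f = fun t => ⨆ n, (Phi φ μ f)^[n] (fun _ => 0) t := by
  set Φ := Phi φ μ f with hΦ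
  set q : S → ℝ≥0∞ := fun t => ⨆ n, Φ^[n] (fun _ => 0) t with hq
  have hchain := iterate_zero_mono φ μ f
  have hshift : ∀ t, q t = ⨆ n, Φ^[n + 1] (fun _ => 0) t := by
    intro t
    apply le_antisymm
    · apply iSup_le
      intro n
      exact (hchain (Nat.le_succ n) t).trans (le_iSup (fun n => Φ^[n + 1] (fun _ => 0) t) n)
    · exact iSup_le fun n => le_iSup (fun n => Φ^[n] (fun _ => 0) t) (n + 1)
  have hfix : Φ q = q := by
    funext t
    rw [hshift t]
    by_cases ht : t ∈ φ
    · have : Φ q t = ⨆ n, Φ (Φ^[n] (fun _ => 0)) t := by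
        rw [hΦ]
        unfold Phi
        rw [if_pos ht]
        simp only [if_pos ht]
        unfold wpF
        calc ∑' a, (μ t a : ℝ≥0∞) * q a
            = ∑' a, ⨆ n, (μ t a : ℝ≥0∞) * Φ^[n] (fun _ => 0) a := by
              apply tsum_congr; intro a; rw [hq]; exact ENNReal.mul_iSup _ _
          _ = ⨆ n, ∑' a, (μ t a : ℝ≥0∞) * Φ^[n] (fun _ => 0) a := by
              apply tsum_iSup_swap_s17
              intro m n hmn a
              exact mul_le_mul_right (hchain hmn a) _
      rw [this]
      apply iSup_congr
      intro n
      rw [Function.iterate_succ_apply']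
    · have h1 : Φ q t = f t := by rw [hΦ]; unfold Phi; rw [if_neg ht]
      have h2 : ∀ n, Φ^[n + 1] (fun _ => 0) t = f t := by
        intro n
        rw [Function.iterate_succ_apply', hΦ]
        unfold Phi
        rw [if_neg ht]
      rw [h1]
      simp [h2]
  have hF : (⟨Phi φ μ f, Phi_mono φ μ f⟩ : (S → ℝ≥0∞) →o (S → ℝ≥0∞)) q = q := hfix
  apply le_antisymm
  · exact OrderHom.lfp_le _ (le_of_eq hF)
  · have hp : ∀ n, Φ^[n] (fun _ => 0) ≤ lfpPhi φ μ f := by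
      intro n
      induction n with
      | zero => intro t; exact zero_le
      | succ n ih =>
        rw [Function.iterate_succ_apply']
        calc Φ (Φ^[n] (fun _ => 0)) ≤ Φ (lfpPhi φ μ f) := Phi_mono φ μ f ih
          _ = lfpPhi φ μ f :=
              OrderHom.map_lfp (⟨Phi φ μ f, Phi_mono φ μ f⟩ : (S → ℝ≥0∞) →o (S → ℝ≥0∞))
    intro t
    exact iSup_le fun n => hp n t

/-! ### Decomposition of the iterates -/

lemma Phi_decomp {φ : Set S} {μ : S → S → ℝ≥0} (f X : S → ℝ≥0∞) :
    ∀ n s, (Phi φ μ f)^[n] X s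
      = (Phi φ μ f)^[n] (fun _ => 0) s + (Phi φ μ (fun _ => 0))^[n] X s := by
  intro n
  induction n with
  | zero => intro s; simp
  | succ n ih =>
    intro s
    rw [Function.iterate_succ_apply', Function.iterate_succ_apply',
      Function.iterate_succ_apply']
    by_cases hs : s ∈ φ
    · unfold Phi
      rw [if_pos hs, if_pos hs, if_pos hs]
      unfold wpF
      calc ∑' a, (μ s a : ℝ≥0∞) * (Phi φ μ f)^[n] X a
          = ∑' a, ((μ s a : ℝ≥0∞) * (Phi φ μ f)^[n] (fun _ => 0) a
              + (μ s a : ℝ≥0∞) * (Phi φ μ (fun _ => 0))^[n] X a) := by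
            apply tsum_congr; intro a; rw [ih a, mul_add]
        _ = _ := ENNReal.tsum_add
    · unfold Phi
      rw [if_neg hs, if_neg hs, if_neg hs]
      simp

/-! ### Path sums -/

noncomputable def gIx (φ : Set S) (n : ℕ) (u : Fin (n + 1) → S) : ℝ≥0∞ :=
  if ∀ i : Fin n, u i.castSucc ∈ φ then 1 else 0

lemma gIx_cons (φ : Set S) (n : ℕ) (a : S) (u : Fin (n + 1) → S) :
    gIx φ (n + 1) (Fin.cons a u) = (if a ∈ φ then 1 else 0) * gIx φ n u := by
  have hiff : (∀ i : Fin (n + 1), (Fin.cons a u : Fin (n + 2) → S) i.castSucc ∈ φ)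
      ↔ (a ∈ φ ∧ ∀ i : Fin n, u i.castSucc ∈ φ) := by
    rw [Fin.forall_fin_succ]
    constructor
    · rintro ⟨h0, h1⟩
      refine ⟨by simpa using h0, fun i => ?_⟩
      have := h1 i
      rwa [← Fin.succ_castSucc, Fin.cons_succ] at this
    · rintro ⟨h0, h1⟩
      refine ⟨by simpa using h0, fun i => ?_⟩
      rw [← Fin.succ_castSucc, Fin.cons_succ]
      exact h1 i
  unfold gIx
  simp only [hiff]
  by_cases h1 : a ∈ φ <;> by_cases h2 : ∀ i : Fin n, u i.castSucc ∈ φ <;> simp [h1, h2]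

noncomputable def PsiSum (φ : Set S) (μ : S → S → ℝ≥0) (X : S → ℝ≥0∞) (n : ℕ) (s : S) : ℝ≥0∞ :=
  ∑' u : Fin (n + 1) → S, (prefP φ μ s (List.ofFn u) : ℝ≥0∞) * (gIx φ n u * X (u (Fin.last n)))

noncomputable def DSum (φ : Set S) (μ : S → S → ℝ≥0) (I : S → ℝ≥0∞) (k : ℕ) (s : S) : ℝ≥0∞ :=
  ∑' u : Fin (k + 2) → S, (prefP φ μ s (List.ofFn u) : ℝ≥0∞) *
    (gIx φ (k + 1) u * dIx I (u (Fin.last (k + 1))) (u ((Fin.last k).castSucc)))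

lemma tsum_consSplit {m : ℕ} (F : (Fin (m + 1) → S) → ℝ≥0∞) :
    ∑' u : Fin (m + 1) → S, F u = ∑' (a : S), ∑' (u' : Fin m → S), F (Fin.cons a u') := by
  rw [← (Fin.consEquiv (fun _ : Fin (m + 1) => S)).tsum_eq F, ENNReal.tsum_prod']
  rfl

lemma tsum_fin1 (F : (Fin 1 → S) → ℝ≥0∞) :
    ∑' u : Fin 1 → S, F u = ∑' b : S, F (fun _ => b) := by
  rw [← (Equiv.funUnique (Fin 1) S).symm.tsum_eq F]
  apply tsum_congr
  intro b
  congr 1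

lemma ofFn_cons {m : ℕ} (a : S) (u : Fin (m + 1) → S) :
    List.ofFn (Fin.cons a u : Fin (m + 2) → S) = a :: List.ofFn u := by
  rw [List.ofFn_succ]
  simp [Fin.cons_succ]

lemma prefP_two (φ : Set S) (μ : S → S → ℝ≥0) (s a b : S) (l : List S) :
    prefP φ μ s (a :: b :: l) = (if a = s then 1 else 0) * (stepP φ μ a b * prefP φ μ b (b :: l)) := by
  have h1 : chainP φ μ (a :: b :: l) = stepP φ μ a b * chainP φ μ (b :: l) := rfl
  have h2 : prefP φ μ b (b :: l) = chainP φ μ (b :: l) := by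
    unfold prefP
    simp
  rw [h2]
  unfold prefP
  rw [h1]
  simp only [List.head?_cons, Option.some.injEq, mul_assoc]

lemma pf_cons (φ : Set S) (μ : S → S → ℝ≥0) {m : ℕ} (s a : S) (u : Fin (m + 1) → S) :
    (prefP φ μ s (List.ofFn (Fin.cons a u : Fin (m + 2) → S)) : ℝ≥0∞)
      = (if a = s then 1 else 0) *
        ((stepP φ μ a (u 0) : ℝ≥0∞) * (prefP φ μ (u 0) (List.ofFn u) : ℝ≥0∞)) := by
  rw [ofFn_cons]
  rw [List.ofFn_succ]
  rw [prefP_two]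
  rw [← List.ofFn_succ]
  push_cast
  by_cases h : a = s <;> simp [h]

lemma pf_head (φ : Set S) (μ : S → S → ℝ≥0) {m : ℕ} (a : S) (u : Fin (m + 1) → S) :
    (prefP φ μ a (List.ofFn u) : ℝ≥0∞)
      = (if u 0 = a then 1 else 0) * (prefP φ μ (u 0) (List.ofFn u) : ℝ≥0∞) := by
  unfold prefP
  rw [List.ofFn_succ]
  simp only [List.head?_cons, Option.some.injEq]
  push_cast
  by_cases h : u 0 = a <;> simp [h]

lemma prefP_singleton (φ : Set S) (μ : S → S → ℝ≥0) (s b : S) :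
    prefP φ μ s [b] = if b = s then 1 else 0 := by
  unfold prefP chainP
  simp [Option.some.injEq]

/-- The peel lemma: splitting off the first step of a guarded path sum. -/
lemma peel (φ : Set S) (μ : S → S → ℝ≥0) (m : ℕ) (s : S) (R : (Fin (m + 1) → S) → ℝ≥0∞) :
    (∑' u : Fin (m + 2) → S,
        (prefP φ μ s (List.ofFn u) : ℝ≥0∞) * (gIx φ (m + 1) u * R (Fin.tail u)))
      = if s ∈ φ then
          ∑' a : S, (μ s a : ℝ≥0∞) *
            ∑' u : Fin (m + 1) → S, (prefP φ μ a (List.ofFn u) : ℝ≥0∞) * (gIx φ m u * R u)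
        else 0 := by
  rw [tsum_consSplit]
  have hterm : ∀ (a : S) (u : Fin (m + 1) → S),
      (prefP φ μ s (List.ofFn (Fin.cons a u : Fin (m + 2) → S)) : ℝ≥0∞) *
          (gIx φ (m + 1) (Fin.cons a u) * R (Fin.tail (Fin.cons a u : Fin (m + 2) → S)))
        = (if a = s then 1 else 0) *
            ((if a ∈ φ then 1 else 0) *
              ((stepP φ μ a (u 0) : ℝ≥0∞) *
                ((prefP φ μ (u 0) (List.ofFn u) : ℝ≥0∞) * (gIx φ m u * R u)))) := by
    intro a u
    rw [pf_cons, gIx_cons, Fin.tail_cons]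
    ring
  simp only [hterm]
  rw [tsum_eq_single s (by intro b hb; simp [hb])]
  simp only [eq_self_iff_true, if_true, one_mul]
  rw [ENNReal.tsum_mul_left]
  by_cases hs : s ∈ φ
  · rw [if_pos hs, if_pos hs, one_mul]
    have hstep : ∀ b : S, stepP φ μ s b = μ s b := fun b => by unfold stepP; rw [if_pos hs]
    calc ∑' u : Fin (m + 1) → S,
          (stepP φ μ s (u 0) : ℝ≥0∞) *
            ((prefP φ μ (u 0) (List.ofFn u) : ℝ≥0∞) * (gIx φ m u * R u))
        = ∑' u : Fin (m + 1) → S, ∑' a : S, (μ s a : ℝ≥0∞) * ((if u 0 = a then 1 else 0) *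
            ((prefP φ μ (u 0) (List.ofFn u) : ℝ≥0∞) * (gIx φ m u * R u))) := by
          apply tsum_congr
          intro u
          rw [tsum_eq_single (u 0) (by intro b hb; simp [(Ne.symm hb : ¬ u 0 = b)])]
          simp [hstep]
      _ = ∑' a : S, ∑' u : Fin (m + 1) → S, (μ s a : ℝ≥0∞) * ((if u 0 = a then 1 else 0) *
            ((prefP φ μ (u 0) (List.ofFn u) : ℝ≥0∞) * (gIx φ m u * R u))) := ENNReal.tsum_comm
      _ = ∑' a : S, (μ s a : ℝ≥0∞) *
            ∑' u : Fin (m + 1) → S, (prefP φ μ a (List.ofFn u) : ℝ≥0∞) * (gIx φ m u * R u) := by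
          apply tsum_congr
          intro a
          rw [← ENNReal.tsum_mul_left]
          apply tsum_congr
          intro u
          rw [pf_head φ μ a u]
          ring
  · rw [if_neg hs, if_neg hs]
    simp

lemma PsiSum_zero (φ : Set S) (μ : S → S → ℝ≥0) (X : S → ℝ≥0∞) (s : S) :
    PsiSum φ μ X 0 s = X s := by
  unfold PsiSum
  rw [tsum_fin1]
  have : ∀ b : S, (prefP φ μ s (List.ofFn (fun _ : Fin 1 => b)) : ℝ≥0∞) *
      (gIx φ 0 (fun _ => b) * X ((fun _ : Fin 1 => b) (Fin.last 0)))
      = if b = s then X b else 0 := by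
    intro b
    have h1 : List.ofFn (fun _ : Fin 1 => b) = [b] := by simp [List.ofFn_succ]
    rw [h1, prefP_singleton]
    unfold gIx
    simp only [IsEmpty.forall_iff, if_true]
    by_cases h : b = s <;> simp [h]
  simp only [this]
  rw [tsum_eq_single s (by intro b hb; simp [hb])]
  simp

lemma PsiSum_succ (φ : Set S) (μ : S → S → ℝ≥0) (X : S → ℝ≥0∞) (n : ℕ) (s : S) :
    PsiSum φ μ X (n + 1) s
      = if s ∈ φ then ∑' a : S, (μ s a : ℝ≥0∞) * PsiSum φ μ X n a else 0 := by
  unfold PsiSum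
  have h1 : ∀ u : Fin (n + 2) → S, X (u (Fin.last (n + 1)))
      = (fun u' : Fin (n + 1) → S => X (u' (Fin.last n))) (Fin.tail u) := by
    intro u
    simp only [Fin.tail]
    rw [Fin.succ_last]
  calc ∑' u : Fin (n + 2) → S, (prefP φ μ s (List.ofFn u) : ℝ≥0∞) *
        (gIx φ (n + 1) u * X (u (Fin.last (n + 1))))
      = ∑' u : Fin (n + 2) → S, (prefP φ μ s (List.ofFn u) : ℝ≥0∞) *
        (gIx φ (n + 1) u * (fun u' : Fin (n + 1) → S => X (u' (Fin.last n))) (Fin.tail u)) := by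
        apply tsum_congr; intro u; rw [h1]
    _ = _ := peel φ μ n s (fun u' : Fin (n + 1) → S => X (u' (Fin.last n)))

lemma PsiSum_eq_iterate (φ : Set S) (μ : S → S → ℝ≥0) (X : S → ℝ≥0∞) :
    ∀ n s, PsiSum φ μ X n s = (Phi φ μ (fun _ => 0))^[n] X s := by
  intro n
  induction n with
  | zero => intro s; rw [PsiSum_zero]; rfl
  | succ n ih =>
    intro s
    rw [PsiSum_succ, Function.iterate_succ_apply']
    have hrw : Phi φ μ (fun _ => 0) ((Phi φ μ (fun _ => 0))^[n] X) s
        = if s ∈ φ then ∑' a, (μ s a : ℝ≥0∞) * (Phi φ μ (fun _ => 0))^[n] X a else 0 := rfl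
    rw [hrw]
    split_ifs with h
    · exact tsum_congr fun a => by rw [ih a]
    · rfl

lemma DSum_succ (φ : Set S) (μ : S → S → ℝ≥0) (I : S → ℝ≥0∞) (k : ℕ) (s : S) :
    DSum φ μ I (k + 1) s
      = if s ∈ φ then ∑' a : S, (μ s a : ℝ≥0∞) * DSum φ μ I k a else 0 := by
  unfold DSum
  have h1 : ∀ u : Fin (k + 3) → S,
      dIx I (u (Fin.last (k + 2))) (u ((Fin.last (k + 1)).castSucc))
      = (fun u' : Fin (k + 2) → S =>
          dIx I (u' (Fin.last (k + 1))) (u' ((Fin.last k).castSucc))) (Fin.tail u) := by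
    intro u
    simp only [Fin.tail]
    rw [Fin.succ_last, Fin.succ_castSucc, Fin.succ_last]
  calc ∑' u : Fin (k + 3) → S, (prefP φ μ s (List.ofFn u) : ℝ≥0∞) *
        (gIx φ (k + 2) u * dIx I (u (Fin.last (k + 2))) (u ((Fin.last (k + 1)).castSucc)))
      = ∑' u : Fin (k + 3) → S, (prefP φ μ s (List.ofFn u) : ℝ≥0∞) *
        (gIx φ (k + 2) u * (fun u' : Fin (k + 2) → S =>
          dIx I (u' (Fin.last (k + 1))) (u' ((Fin.last k).castSucc))) (Fin.tail u)) := by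
        apply tsum_congr; intro u; rw [h1]
    _ = _ := peel φ μ (k + 1) s (fun u' : Fin (k + 2) → S =>
          dIx I (u' (Fin.last (k + 1))) (u' ((Fin.last k).castSucc)))

lemma DSum_zero_le (φ : Set S) (μ : S → S → ℝ≥0) (I : S → ℝ≥0∞) {c : ℝ≥0}
    (hc : ∀ s, dExp φ μ I s ≤ (c : ℝ≥0∞)) (s : S) :
    DSum φ μ I 0 s ≤ (c : ℝ≥0∞) * if s ∈ φ then 1 else 0 := by
  unfold DSum
  rw [tsum_consSplit]
  have hterm : ∀ (a : S) (u : Fin 1 → S),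
      (prefP φ μ s (List.ofFn (Fin.cons a u : Fin 2 → S)) : ℝ≥0∞) *
        (gIx φ 1 (Fin.cons a u) *
          dIx I ((Fin.cons a u : Fin 2 → S) (Fin.last 1))
            ((Fin.cons a u : Fin 2 → S) ((Fin.last 0).castSucc)))
      = (if a = s then 1 else 0) * ((if a ∈ φ then 1 else 0) *
          ((stepP φ μ a (u 0) : ℝ≥0∞) * dIx I (u 0) a)) := by
    intro a u
    rw [pf_cons, gIx_cons]
    have h2 : (Fin.cons a u : Fin 2 → S) (Fin.last 1) = u 0 := by
      have : (Fin.last 1 : Fin 2) = (0 : Fin 1).succ := rfl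
      rw [this, Fin.cons_succ]
    have h3 : (Fin.cons a u : Fin 2 → S) ((Fin.last 0).castSucc) = a := by
      have : ((Fin.last 0).castSucc : Fin 2) = 0 := rfl
      rw [this, Fin.cons_zero]
    rw [h2, h3]
    have h4 : gIx φ 0 u = 1 := by unfold gIx; simp
    have h5 : (prefP φ μ (u 0) (List.ofFn u) : ℝ≥0∞) = 1 := by
      have : List.ofFn u = [u 0] := by simp [List.ofFn_succ]
      rw [this, prefP_singleton]
      simp
    rw [h4, h5]
    ring
  simp only [hterm]
  rw [tsum_eq_single s (by intro b hb; simp [hb])]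
  simp only [eq_self_iff_true, if_true, one_mul]
  rw [ENNReal.tsum_mul_left]
  by_cases hs : s ∈ φ
  · rw [if_pos hs, one_mul, mul_one]
    have hstep : ∀ b : S, stepP φ μ s b = μ s b := fun b => by unfold stepP; rw [if_pos hs]
    rw [tsum_fin1]
    have := hc s
    rw [dExp, if_pos hs] at this
    calc ∑' b : S, (stepP φ μ s b : ℝ≥0∞) * dIx I b s
        = ∑' b : S, (μ s b : ℝ≥0∞) * ((I b - I s) ⊔ (I s - I b)) := by
          apply tsum_congr; intro b; rw [hstep]; rfl
      _ ≤ c := this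
  · rw [if_neg hs]
    simp

lemma DSum_le (φ : Set S) {μ : S → S → ℝ≥0} (hμ : ∀ s, ∑' s', μ s s' = 1)
    (I : S → ℝ≥0∞) {c : ℝ≥0} (hc : ∀ s, dExp φ μ I s ≤ (c : ℝ≥0∞)) :
    ∀ k s, DSum φ μ I k s ≤ (c : ℝ≥0∞) * PsiSum φ μ (fun _ => 1) (k + 1) s := by
  intro k
  induction k with
  | zero =>
    intro s
    refine (DSum_zero_le φ μ I hc s).trans ?_
    apply mul_le_mul_right
    rw [PsiSum_succ]
    split_ifs with hs
    · have : ∀ a : S, (μ s a : ℝ≥0∞) * PsiSum φ μ (fun _ => 1) 0 a = (μ s a : ℝ≥0∞) := by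
        intro a; rw [PsiSum_zero, mul_one]
      simp only [this]
      rw [mass_one hμ]
    · exact le_rfl
  | succ k ih =>
    intro s
    rw [DSum_succ, PsiSum_succ]
    split_ifs with hs
    · rw [← ENNReal.tsum_mul_left]
      apply ENNReal.tsum_le_tsum
      intro a
      calc (μ s a : ℝ≥0∞) * DSum φ μ I k a
          ≤ (μ s a : ℝ≥0∞) * ((c : ℝ≥0∞) * PsiSum φ μ (fun _ => 1) (k + 1) a) :=
            mul_le_mul_right (ih a) _
        _ = (c : ℝ≥0∞) * ((μ s a : ℝ≥0∞) * PsiSum φ μ (fun _ => 1) (k + 1) a) := by ring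
    · simp


/-! ### Integral representations -/

def EnS (φ : Set S) (n : ℕ) : Set (ℕ → S) := {ϑ | ∀ i : Fin n, ϑ (i : ℕ) ∈ φ}

lemma EnS_anti (φ : Set S) {m n : ℕ} (hmn : m ≤ n) : EnS φ n ⊆ EnS φ m := by
  intro ϑ h i
  have := h (Fin.castLE hmn i)
  simpa using this

lemma EnS_meas [Countable S] [MeasurableSpace S] [DiscreteMeasurableSpace S]
    (φ : Set S) (n : ℕ) : MeasurableSet (EnS φ n) := by
  have : EnS φ n = ⋂ i : Fin n, (fun ϑ : ℕ → S => ϑ (i : ℕ)) ⁻¹' φ := by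
    ext ϑ
    simp [EnS, Set.mem_iInter]
  rw [this]
  exact MeasurableSet.iInter fun i => measurable_pi_apply _ MeasurableSet.of_discrete

lemma measurableSingleton_pi [Countable S] [MeasurableSpace S] [DiscreteMeasurableSpace S]
    {m : ℕ} (v : Fin m → S) : MeasurableSet {v} := by
  have : {v} = ⋂ i, (fun u : Fin m → S => u i) ⁻¹' {v i} := by
    ext u
    simp [funext_iff]
  rw [this]
  exact MeasurableSet.iInter fun i => measurable_pi_apply i (measurableSet_singleton _)

lemma Cyl_ofFn_s17 {m : ℕ} (v : Fin (m + 1) → S) :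
    Cyl (List.ofFn v) = {ϑ : ℕ → S | ∀ i : Fin (m + 1), ϑ (i : ℕ) = v i} := by
  ext ϑ
  constructor
  · intro h i
    have := h (Fin.cast (List.length_ofFn : (List.ofFn v).length = _).symm i)
    rw [List.get_ofFn] at this
    simpa using this
  · intro h i
    rw [List.get_ofFn]
    have := h (Fin.cast (List.length_ofFn : (List.ofFn v).length = _) i)
    simpa using this

open MeasureTheory in
lemma lintegral_tuple [Countable S] [MeasurableSpace S] [DiscreteMeasurableSpace S]
    (φ : Set S) (μ : S → S → ℝ≥0) (s : S) (P : Measure (ℕ → S))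
    (hPC : ∀ π : List S, π ≠ [] → P (Cyl π) = (prefP φ μ s π : ℝ≥0∞))
    {m : ℕ} (g : (Fin (m + 1) → S) → ℝ≥0∞) :
    ∫⁻ ϑ, g (fun i : Fin (m + 1) => ϑ (i : ℕ)) ∂P
      = ∑' u : Fin (m + 1) → S, (prefP φ μ s (List.ofFn u) : ℝ≥0∞) * g u := by
  haveI : MeasurableSingletonClass (Fin (m + 1) → S) := ⟨measurableSingleton_pi⟩
  have hproj : Measurable (fun ϑ : ℕ → S => fun i : Fin (m + 1) => ϑ (i : ℕ)) :=
    measurable_pi_lambda _ fun i => measurable_pi_apply _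
  have hg : Measurable g := measurable_of_countable g
  rw [← lintegral_map hg hproj, lintegral_countable']
  apply tsum_congr
  intro u
  rw [Measure.map_apply hproj (measurableSet_singleton u)]
  have hpre : (fun ϑ : ℕ → S => fun i : Fin (m + 1) => ϑ (i : ℕ)) ⁻¹' {u}
      = Cyl (List.ofFn u) := by
    rw [Cyl_ofFn_s17]
    ext ϑ
    simp [funext_iff]
  rw [hpre, hPC _ (by rw [List.ofFn_succ]; exact List.cons_ne_nil _ _)]
  exact mul_comm _ _

open MeasureTheory in
lemma bridge1 [Countable S] [MeasurableSpace S] [DiscreteMeasurableSpace S]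
    (φ : Set S) (μ : S → S → ℝ≥0) (s : S) (P : Measure (ℕ → S))
    (hPC : ∀ π : List S, π ≠ [] → P (Cyl π) = (prefP φ μ s π : ℝ≥0∞))
    (X : S → ℝ≥0∞) (n : ℕ) :
    (Phi φ μ (fun _ => 0))^[n] X s
      = ∫⁻ ϑ, (if ϑ ∈ EnS φ n then X (ϑ n) else 0) ∂P := by
  rw [← PsiSum_eq_iterate φ μ X n s]
  have hL := lintegral_tuple φ μ s P hPC
    (fun u : Fin (n + 1) → S => gIx φ n u * X (u (Fin.last n)))
  have h1 : PsiSum φ μ X n s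
      = ∫⁻ ϑ, (fun u : Fin (n + 1) → S => gIx φ n u * X (u (Fin.last n)))
          (fun i : Fin (n + 1) => ϑ (i : ℕ)) ∂P := by
    rw [hL]; rfl
  rw [h1]
  apply lintegral_congr
  intro ϑ
  show gIx φ n (fun i : Fin (n + 1) => ϑ (i : ℕ))
      * X (ϑ ((Fin.last n : Fin (n + 1)) : ℕ)) = _
  have hcond : (∀ i : Fin n, (fun j : Fin (n + 1) => ϑ (j : ℕ)) i.castSucc ∈ φ)
      ↔ ϑ ∈ EnS φ n := by
    constructor <;> intro h i <;> simpa [Fin.coe_castSucc] using h i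
  unfold gIx
  rw [Fin.val_last]
  by_cases h : ϑ ∈ EnS φ n
  · rw [if_pos (hcond.2 h), if_pos h, one_mul]
  · rw [if_neg (fun hh => h (hcond.1 hh)), if_neg h, zero_mul]

open MeasureTheory in
lemma bridge2 [Countable S] [MeasurableSpace S] [DiscreteMeasurableSpace S]
    (φ : Set S) (μ : S → S → ℝ≥0) (I : S → ℝ≥0∞) (s : S) (P : Measure (ℕ → S))
    (hPC : ∀ π : List S, π ≠ [] → P (Cyl π) = (prefP φ μ s π : ℝ≥0∞))
    (k : ℕ) :
    DSum φ μ I k s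
      = ∫⁻ ϑ, (if ϑ ∈ EnS φ (k + 1) then dIx I (ϑ (k + 1)) (ϑ k) else 0) ∂P := by
  have hL := lintegral_tuple φ μ s P hPC
    (fun u : Fin (k + 2) → S =>
      gIx φ (k + 1) u * dIx I (u (Fin.last (k + 1))) (u ((Fin.last k).castSucc)))
  have h1 : DSum φ μ I k s
      = ∫⁻ ϑ, (fun u : Fin (k + 2) → S =>
          gIx φ (k + 1) u * dIx I (u (Fin.last (k + 1))) (u ((Fin.last k).castSucc)))
          (fun i : Fin (k + 2) => ϑ (i : ℕ)) ∂P := by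
    rw [hL]; rfl
  rw [h1]
  apply lintegral_congr
  intro ϑ
  show gIx φ (k + 1) (fun i : Fin (k + 2) => ϑ (i : ℕ))
      * dIx I (ϑ ((Fin.last (k + 1) : Fin (k + 2)) : ℕ))
          (ϑ (((Fin.last k).castSucc : Fin (k + 2)) : ℕ)) = _
  have hcond : (∀ i : Fin (k + 1), (fun j : Fin (k + 2) => ϑ (j : ℕ)) i.castSucc ∈ φ)
      ↔ ϑ ∈ EnS φ (k + 1) := by
    constructor <;> intro h i <;> simpa [Fin.coe_castSucc] using h i
  unfold gIx
  rw [Fin.val_last, Fin.coe_castSucc, Fin.val_last]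
  by_cases h : ϑ ∈ EnS φ (k + 1)
  · rw [if_pos (hcond.2 h), if_pos h, one_mul]
  · rw [if_neg (fun hh => h (hcond.1 hh)), if_neg h, zero_mul]

lemma mem_EnS_lt_loopT (φ : Set S) (k : ℕ) (ϑ : ℕ → S) (h : ϑ ∈ EnS φ (k + 1)) :
    (k : ℕ∞) < loopT φ ϑ := by
  have h1 : ((k : ℕ∞) + 1 : ℕ∞) ≤ loopT φ ϑ := by
    apply le_sInf
    rintro n ⟨m, rfl, hm⟩
    have hmk : ¬ m ≤ k := by
      intro hle
      exact hm (by simpa using h (Fin.mk m (Nat.lt_succ_of_le hle)))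
    have h2 : k + 1 ≤ m := Nat.succ_le_of_lt (Nat.lt_of_not_le hmk)
    calc ((k : ℕ∞) + 1 : ℕ∞) = ((k + 1 : ℕ) : ℕ∞) := by push_cast; rfl
      _ ≤ (m : ℕ∞) := by exact_mod_cast h2
  calc (k : ℕ∞) < (k : ℕ∞) + 1 := by
        refine lt_of_lt_of_le ?_ (le_refl _)
        exact_mod_cast Nat.lt_succ_self k
    _ ≤ loopT φ ϑ := h1

lemma tsum_lt_loopT_le (φ : Set S) (ϑ : ℕ → S) :
    (∑' k : ℕ, if (k : ℕ∞) < loopT φ ϑ then (1 : ℝ≥0∞) else 0)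
      ≤ ((loopT φ ϑ : ℕ∞) : ℝ≥0∞) := by
  rcases eq_top_or_lt_top (loopT φ ϑ) with ht | ht
  · rw [ht]
    simp
  · set m := (loopT φ ϑ).toNat with hmdef
    have hm : (m : ℕ∞) = loopT φ ϑ := ENat.coe_toNat ht.ne
    have hiff : ∀ k : ℕ, ((k : ℕ∞) < loopT φ ϑ ↔ k < m) := by
      intro k
      rw [← hm]
      exact_mod_cast Iff.rfl
    have h1 : ∀ k : ℕ, (if (k : ℕ∞) < loopT φ ϑ then (1 : ℝ≥0∞) else 0)
        = if k < m then 1 else 0 := by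
      intro k
      by_cases h : k < m
      · rw [if_pos ((hiff k).2 h), if_pos h]
      · rw [if_neg (fun hh => h ((hiff k).1 hh)), if_neg h]
    simp only [h1]
    rw [tsum_eq_sum (s := Finset.range m)
      (by intro k hk; rw [if_neg]; simpa using hk)]
    have h2 : ∀ k ∈ Finset.range m, (if k < m then (1 : ℝ≥0∞) else 0) = 1 := by
      intro k hk
      rw [if_pos (Finset.mem_range.1 hk)]
    rw [Finset.sum_congr rfl h2, ← hm]
    simp [ENat.toENNReal_coe]

end UIAux

/-- **Uniform integrability at a state with finite expected looping time.** If the finite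
expectation `I` harmonizes with the finite `f`, is conditionally difference bounded, and
`Φ_f(I)` is finite, then at every state `s` with `E_s[τ] < ∞` all iterates `Φ_fⁿ(I)(s)`
are finite and converge to `(lfp Φ_f)(s)`. -/
theorem ui_at_state_of_cdb {S : Type*} [Countable S] [MeasurableSpace S] [DiscreteMeasurableSpace S]
    (φ : Set S) (μ : S → S → ℝ≥0) (hμ : ∀ s, ∑' s', μ s s' = 1)
    (P : S → Measure (ℕ → S)) (hP : ∀ s, IsProbabilityMeasure (P s))
    (hPC : ∀ (s : S) (π : List S), π ≠ [] → P s (Cyl π) = (prefP φ μ s π : ℝ≥0∞))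
    (f I : S → ℝ≥0∞) (hf : FinExp f) (hI : FinExp I)
    (hharm : Harmonizes φ I f) (hcdb : CondDiffBdd φ μ I)
    (hPhiI : FinExp (Phi φ μ f I))
    (s : S) (hτs : ∫⁻ ϑ, (loopT φ ϑ : ℝ≥0∞) ∂(P s) < ⊤) :
    (∀ n : ℕ, (Phi φ μ f)^[n] I s < ⊤) ∧
    Tendsto (fun n => (Phi φ μ f)^[n] I s) atTop (nhds (lfpPhi φ μ f s)) := by
  classical
  obtain ⟨c, hc⟩ := hcdb
  -- Part 1: finiteness of the iterates
  have hfin : ∀ n : ℕ, (Phi φ μ f)^[n] I s < ⊤ := by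
    intro n
    refine lt_of_le_of_lt (iter_bound hμ hharm hc n s) ?_
    exact ENNReal.add_lt_top.2 ⟨hI s,
      lt_top_iff_ne_top.2 (ENNReal.mul_ne_top (ENNReal.natCast_ne_top n) ENNReal.coe_ne_top)⟩
  refine ⟨hfin, ?_⟩
  haveI := hP s
  -- measurability of the guard events
  have hEnMeas : ∀ n, MeasurableSet (EnS φ n) := EnS_meas φ
  -- the tail probabilities are summable
  have htk : (∑' k : ℕ, P s (EnS φ (k + 1))) ≤ ∫⁻ ϑ, (loopT φ ϑ : ℝ≥0∞) ∂(P s) := by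
    have h1 : ∀ k : ℕ, P s (EnS φ (k + 1))
        = ∫⁻ ϑ, (if ϑ ∈ EnS φ (k + 1) then (1 : ℝ≥0∞) else 0) ∂(P s) := by
      intro k
      rw [← lintegral_indicator_one (hEnMeas (k + 1))]
      apply lintegral_congr
      intro ϑ
      simp [Set.indicator_apply]
    simp only [h1]
    rw [← lintegral_tsum (f := fun (k : ℕ) (ϑ : ℕ → S) => if ϑ ∈ EnS φ (k + 1) then (1 : ℝ≥0∞) else 0)
      (fun k => (Measurable.ite (hEnMeas (k + 1)) measurable_const measurable_const).aemeasurable)]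
    apply lintegral_mono
    intro ϑ
    refine le_trans (ENNReal.tsum_le_tsum (fun k => ?_)) (tsum_lt_loopT_le φ ϑ)
    by_cases h : ϑ ∈ EnS φ (k + 1)
    · rw [if_pos h, if_pos (mem_EnS_lt_loopT φ k ϑ h)]
    · rw [if_neg h]
      exact zero_le
  have htfin : (∑' k : ℕ, P s (EnS φ (k + 1))) ≠ ⊤ := (htk.trans_lt hτs).ne
  have htzero : Tendsto (fun n => P s (EnS φ n)) atTop (nhds 0) :=
    (Filter.tendsto_add_atTop_iff_nat 1).1 (ENNReal.tendsto_atTop_zero_of_tsum_ne_top htfin)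
  -- the difference process and its sum
  set DOm : ℕ → (ℕ → S) → ℝ≥0∞ :=
    fun k ϑ => if ϑ ∈ EnS φ (k + 1) then dIx I (ϑ (k + 1)) (ϑ k) else 0 with hDOm
  have hDOmMeas : ∀ k, Measurable (DOm k) := by
    intro k
    apply Measurable.ite (hEnMeas (k + 1)) ?_ measurable_const
    have h1 : (fun ϑ : ℕ → S => dIx I (ϑ (k + 1)) (ϑ k))
        = (fun p : S × S => dIx I p.1 p.2) ∘ (fun ϑ : ℕ → S => (ϑ (k + 1), ϑ k)) := rfl
    rw [h1]
    exact (measurable_of_countable _).comp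
      ((measurable_pi_apply _).prodMk (measurable_pi_apply _))
  set Y : (ℕ → S) → ℝ≥0∞ := fun ϑ => ∑' k, DOm k ϑ with hY
  have hYMeas : Measurable Y := Measurable.ennreal_tsum hDOmMeas
  have hYint : ∫⁻ ϑ, Y ϑ ∂(P s) ≤ (c : ℝ≥0∞) * ∑' k : ℕ, P s (EnS φ (k + 1)) := by
    rw [hY, lintegral_tsum (fun k => (hDOmMeas k).aemeasurable), ← ENNReal.tsum_mul_left]
    apply ENNReal.tsum_le_tsum
    intro k
    have h2 : ∫⁻ ϑ, DOm k ϑ ∂(P s) = DSum φ μ I k s := (bridge2 φ μ I s (P s) (hPC s) k).symm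
    rw [h2]
    refine (DSum_le φ hμ I hc k s).trans (le_of_eq ?_)
    congr 1
    rw [PsiSum_eq_iterate, bridge1 φ μ s (P s) (hPC s) (fun _ => 1) (k + 1),
      ← lintegral_indicator_one (hEnMeas (k + 1))]
    apply lintegral_congr
    intro ϑ
    simp [Set.indicator_apply]
  have hYfin : ∫⁻ ϑ, Y ϑ ∂(P s) ≠ ⊤ := by
    refine (hYint.trans_lt ?_).ne
    exact ENNReal.mul_lt_top ENNReal.coe_lt_top (lt_top_iff_ne_top.2 htfin)
  -- the set of divergent runs is null
  have hnull : P s (⋂ n, EnS φ n) = 0 := by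
    have hle : ∀ n, P s (⋂ m, EnS φ m) ≤ P s (EnS φ n) :=
      fun n => measure_mono (Set.iInter_subset _ n)
    exact le_antisymm (ge_of_tendsto' htzero hle) zero_le
  -- dominated convergence
  have hlim0 : Tendsto (fun n => ∫⁻ ϑ, (if ϑ ∈ EnS φ n then Y ϑ else 0) ∂(P s))
      atTop (nhds 0) := by
    have hDCT := tendsto_lintegral_of_dominated_convergence (μ := P s)
      (F := fun n ϑ => if ϑ ∈ EnS φ n then Y ϑ else 0)
      (f := fun ϑ => if ϑ ∈ ⋂ m, EnS φ m then Y ϑ else 0) Y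
      (fun n => Measurable.ite (hEnMeas n) hYMeas measurable_const)
      (fun n => Filter.Eventually.of_forall (fun ϑ => by
        dsimp only
        by_cases h : ϑ ∈ EnS φ n
        · rw [if_pos h]
        · rw [if_neg h]; exact zero_le))
      hYfin
      (Filter.Eventually.of_forall (fun ϑ => by
        by_cases hϑ : ϑ ∈ ⋂ m, EnS φ m
        · have h3 : ∀ n, (if ϑ ∈ EnS φ n then Y ϑ else 0) = Y ϑ :=
            fun n => if_pos (Set.mem_iInter.1 hϑ n)
          simp only [h3, if_pos hϑ]
          exact tendsto_const_nhds
        · obtain ⟨n0, hn0⟩ : ∃ n0, ϑ ∉ EnS φ n0 := by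
            simpa [Set.mem_iInter] using hϑ
          rw [if_neg hϑ]
          apply tendsto_atTop_of_eventually_const (i₀ := n0)
          intro n hn
          exact if_neg (fun hmem => hn0 (EnS_anti φ hn hmem))))
    have hz : ∫⁻ ϑ, (if ϑ ∈ ⋂ m, EnS φ m then Y ϑ else 0) ∂(P s) = 0 := by
      have h4 : (fun ϑ => if ϑ ∈ ⋂ m, EnS φ m then Y ϑ else 0)
          = (⋂ m, EnS φ m).indicator Y := by
        funext ϑ
        simp [Set.indicator_apply]
      rw [h4, lintegral_indicator (MeasurableSet.iInter (fun m => hEnMeas m)),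
        setLIntegral_measure_zero _ _ hnull]
    rwa [hz] at hDCT
  -- triangle inequality along a run
  have htriangle : ∀ (ϑ : ℕ → S) (n : ℕ),
      I (ϑ n) ≤ I (ϑ 0) + ∑ k ∈ Finset.range n, dIx I (ϑ (k + 1)) (ϑ k) := by
    intro ϑ n
    induction n with
    | zero => simp
    | succ n ih =>
      rw [Finset.sum_range_succ, ← add_assoc]
      exact (le_add_dIx I (ϑ (n + 1)) (ϑ n)).trans (add_le_add_left ih _)
  -- almost every run starts in s
  have hae : ∀ᵐ ϑ ∂(P s), ϑ 0 = s := by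
    have hmeas0 : MeasurableSet {ϑ : ℕ → S | ϑ 0 = s} := by
      have h9 : {ϑ : ℕ → S | ϑ 0 = s} = (fun ϑ : ℕ → S => ϑ 0) ⁻¹' {s} := rfl
      rw [h9]
      exact measurable_pi_apply 0 (measurableSet_singleton s)
    have hCyl : Cyl [s] = {ϑ : ℕ → S | ϑ 0 = s} := by
      ext ϑ
      constructor
      · intro h
        exact h ⟨0, by simp⟩
      · intro h i
        have h5 : (i : ℕ) = 0 := Nat.lt_one_iff.1 i.2
        simpa [h5] using h
    have hP1 : P s {ϑ : ℕ → S | ϑ 0 = s} = 1 := by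
      rw [← hCyl, hPC s [s] (by simp), prefP_singleton]
      simp
    rw [ae_iff]
    have h6 : {ϑ : ℕ → S | ¬ ϑ 0 = s} = {ϑ : ℕ → S | ϑ 0 = s}ᶜ := rfl
    rw [h6, prob_compl_eq_zero_iff hmeas0]
    exact hP1
  -- the key bound on the linear part of the iterates
  have hmain : ∀ n : ℕ, (Phi φ μ (fun _ => 0))^[n] I s
      ≤ I s * P s (EnS φ n) + ∫⁻ ϑ, (if ϑ ∈ EnS φ n then Y ϑ else 0) ∂(P s) := by
    intro n
    rw [bridge1 φ μ s (P s) (hPC s) I n]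
    have hptw : ∀ᵐ ϑ ∂(P s), (if ϑ ∈ EnS φ n then I (ϑ n) else 0)
        ≤ (EnS φ n).indicator (fun _ => I s) ϑ + (if ϑ ∈ EnS φ n then Y ϑ else 0) := by
      filter_upwards [hae] with ϑ h0
      by_cases hϑ : ϑ ∈ EnS φ n
      · rw [if_pos hϑ, if_pos hϑ, Set.indicator_of_mem hϑ]
        calc I (ϑ n) ≤ I (ϑ 0) + ∑ k ∈ Finset.range n, dIx I (ϑ (k + 1)) (ϑ k) :=
              htriangle ϑ n
          _ = I s + ∑ k ∈ Finset.range n, dIx I (ϑ (k + 1)) (ϑ k) := by rw [h0]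
          _ ≤ I s + Y ϑ := by
              apply add_le_add_right
              have h7 : ∑ k ∈ Finset.range n, dIx I (ϑ (k + 1)) (ϑ k)
                  = ∑ k ∈ Finset.range n, DOm k ϑ := by
                apply Finset.sum_congr rfl
                intro k hk
                have hm : ϑ ∈ EnS φ (k + 1) :=
                  EnS_anti φ (Nat.succ_le_of_lt (Finset.mem_range.1 hk)) hϑ
                show dIx I (ϑ (k + 1)) (ϑ k)
                    = if ϑ ∈ EnS φ (k + 1) then dIx I (ϑ (k + 1)) (ϑ k) else 0
                rw [if_pos hm]
              rw [h7, hY]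
              exact ENNReal.sum_le_tsum _
      · rw [if_neg hϑ, if_neg hϑ, Set.indicator_of_notMem hϑ]
        simp
    calc ∫⁻ ϑ, (if ϑ ∈ EnS φ n then I (ϑ n) else 0) ∂(P s)
        ≤ ∫⁻ ϑ, ((EnS φ n).indicator (fun _ => I s) ϑ
            + (if ϑ ∈ EnS φ n then Y ϑ else 0)) ∂(P s) := lintegral_mono_ae hptw
      _ = I s * P s (EnS φ n) + ∫⁻ ϑ, (if ϑ ∈ EnS φ n then Y ϑ else 0) ∂(P s) := by
          rw [lintegral_add_left (measurable_const.indicator (hEnMeas n)),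
            lintegral_indicator_const (hEnMeas n)]
  -- the linear part tends to zero
  have hPsiTend : Tendsto (fun n => (Phi φ μ (fun _ => 0))^[n] I s) atTop (nhds 0) := by
    have h8 : Tendsto (fun n => I s * P s (EnS φ n)) atTop (nhds 0) := by
      have := ENNReal.Tendsto.const_mul (a := I s) htzero (Or.inr (hI s).ne)
      simpa using this
    have hub := h8.add hlim0
    rw [add_zero] at hub
    exact tendsto_of_tendsto_of_tendsto_of_le_of_le tendsto_const_nhds hub
      (fun n => zero_le) hmain
  -- assemble
  have hiter : Tendsto (fun n => (Phi φ μ f)^[n] (fun _ => 0) s) atTop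
      (nhds (⨆ n, (Phi φ μ f)^[n] (fun _ => 0) s)) :=
    tendsto_atTop_iSup (fun a b hab => iterate_zero_mono φ μ f hab s)
  have hsum := hiter.add hPsiTend
  rw [add_zero] at hsum
  have hlfps : lfpPhi φ μ f s = ⨆ n, (Phi φ μ f)^[n] (fun _ => 0) s := by
    rw [lfpPhi_eq_iSup φ μ f]
  have heq : (fun n => (Phi φ μ f)^[n] I s)
      = fun n => (Phi φ μ f)^[n] (fun _ => 0) s + (Phi φ μ (fun _ => 0))^[n] I s :=
    funext fun n => Phi_decomp f I n s
  rw [heq, hlfps]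
  exact hsum
end
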